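/- Let X be a Banach space and G: X × X → X a bilinear map with ‖G(u,v)‖ ≤ N₀ ‖u‖ ‖v‖ for some N₀ > 0 and all u, v ∈ X. Then for every u₀ ∈ X with 4 N₀ ‖u₀‖ < 1, the equation u = u₀ + G(u,u) has a solution u ∈ X satisfying ‖u‖ ≤ 2‖u₀‖, and this solution is unique in the ball {u : ‖u‖ ≤ 2‖u₀‖}. -/
import Mathlib


/-- **Abstract bilinear fixed-point lemma.** If `G : X × X → X` is bilinear on a Banach
space `X` with `‖G(u,v)‖ ≤ N₀ ‖u‖ ‖v‖`, then for every `u₀` with `4 N₀ ‖u₀‖ < 1`, the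
equation `u = u₀ + G(u,u)` has a solution with `‖u‖ ≤ 2‖u₀‖`, unique in the ball
`{u : ‖u‖ ≤ 2‖u₀‖}`. -/
theorem bilinear_fixed_point
    (X : Type*) [NormedAddCommGroup X] [NormedSpace ℝ X] [CompleteSpace X]
    (G : X → X → X)
    (hadd₁ : ∀ a b c : X, G (a + b) c = G a c + G b c)
    (hsmul₁ : ∀ (r : ℝ) (a b : X), G (r • a) b = r • G a b)
    (hadd₂ : ∀ a b c : X, G a (b + c) = G a b + G a c)
    (hsmul₂ : ∀ (r : ℝ) (a b : X), G a (r • b) = r • G a b)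
    (N₀ : ℝ) (hN₀ : 0 < N₀) (hG : ∀ u v : X, ‖G u v‖ ≤ N₀ * ‖u‖ * ‖v‖)
    (u₀ : X) (hu₀ : 4 * N₀ * ‖u₀‖ < 1) :
    ∃ u : X, u = u₀ + G u u ∧ ‖u‖ ≤ 2 * ‖u₀‖ ∧
      ∀ v : X, v = u₀ + G v v → ‖v‖ ≤ 2 * ‖u₀‖ → v = u := by
  have hu₀n : (0:ℝ) ≤ ‖u₀‖ := norm_nonneg _
  set R : ℝ := 2 * ‖u₀‖ with hR
  have hknn : (0:ℝ) ≤ 4 * N₀ * ‖u₀‖ := by positivity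
  -- bilinearity gives subtraction rules
  have hsub₁ : ∀ a b c : X, G (a - b) c = G a c - G b c := by
    intro a b c
    have hneg : G (-b) c = -G b c := by simpa using hsmul₁ (-1) b c
    rw [sub_eq_add_neg, hadd₁, hneg, sub_eq_add_neg]
  have hsub₂ : ∀ a b c : X, G a (b - c) = G a b - G a c := by
    intro a b c
    have hneg : G a (-c) = -G a c := by simpa using hsmul₂ (-1) a c
    rw [sub_eq_add_neg, hadd₂, hneg, sub_eq_add_neg]
  -- key contraction estimate
  have key : ∀ u v : X, ‖u‖ ≤ R → ‖v‖ ≤ R →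
      ‖(u₀ + G u u) - (u₀ + G v v)‖ ≤ (4 * N₀ * ‖u₀‖) * ‖u - v‖ := by
    intro u v hu hv
    have h1 : (u₀ + G u u) - (u₀ + G v v) = G u (u - v) + G (u - v) v := by
      rw [hsub₂, hsub₁]; abel
    rw [h1]
    calc ‖G u (u - v) + G (u - v) v‖ ≤ ‖G u (u - v)‖ + ‖G (u - v) v‖ := norm_add_le _ _
      _ ≤ N₀ * ‖u‖ * ‖u - v‖ + N₀ * ‖u - v‖ * ‖v‖ := add_le_add (hG _ _) (hG _ _)
      _ ≤ N₀ * R * ‖u - v‖ + N₀ * ‖u - v‖ * R := by gcongr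
      _ = (4 * N₀ * ‖u₀‖) * ‖u - v‖ := by rw [hR]; ring
  -- the map sends the ball to itself
  have hmaps : ∀ u : X, ‖u‖ ≤ R → ‖u₀ + G u u‖ ≤ R := by
    intro u hu
    have h2 : ‖G u u‖ ≤ N₀ * R * R := by
      calc ‖G u u‖ ≤ N₀ * ‖u‖ * ‖u‖ := hG u u
        _ ≤ N₀ * R * R := by gcongr
    have h3 : N₀ * R * R = (4 * N₀ * ‖u₀‖) * ‖u₀‖ := by rw [hR]; ring
    have h4 : (4 * N₀ * ‖u₀‖) * ‖u₀‖ ≤ 1 * ‖u₀‖ :=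
      mul_le_mul_of_nonneg_right hu₀.le hu₀n
    calc ‖u₀ + G u u‖ ≤ ‖u₀‖ + ‖G u u‖ := norm_add_le _ _
      _ ≤ ‖u₀‖ + (4 * N₀ * ‖u₀‖) * ‖u₀‖ := by rw [← h3]; linarith
      _ ≤ R := by rw [hR]; linarith
  -- set up the contraction on the closed ball
  set s : Set X := Metric.closedBall (0 : X) R with hs
  have hmem : ∀ u : X, u ∈ s ↔ ‖u‖ ≤ R := by
    intro u; simp [hs, Metric.mem_closedBall, dist_zero_right]
  haveI : CompleteSpace s := (Metric.isClosed_closedBall).completeSpace_coe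
  haveI : Nonempty s := ⟨⟨u₀, (hmem u₀).mpr (by rw [hR]; linarith)⟩⟩
  set f : s → s := fun w => ⟨u₀ + G w w, (hmem _).mpr (hmaps _ ((hmem _).mp w.2))⟩ with hf
  have hcontr : ContractingWith (Real.toNNReal (4 * N₀ * ‖u₀‖)) f := by
    constructor
    · exact_mod_cast Real.toNNReal_lt_one.mpr hu₀
    · apply LipschitzWith.of_dist_le_mul
      intro x y
      rw [Subtype.dist_eq, Subtype.dist_eq, dist_eq_norm, dist_eq_norm,
        Real.coe_toNNReal _ hknn]
      exact key x y ((hmem _).mp x.2) ((hmem _).mp y.2)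
  set u : s := hcontr.fixedPoint f with hu
  have hfix : f u = u := hcontr.fixedPoint_isFixedPt
  have hfix' : (u : X) = u₀ + G u u := by
    conv_lhs => rw [← hfix]
  refine ⟨u, hfix', (hmem _).mp u.2, ?_⟩
  intro v hv hvR
  by_contra hne
  have hpos : 0 < ‖v - (u : X)‖ := by
    rw [norm_pos_iff, sub_ne_zero]; exact hne
  have h5 : ‖v - (u : X)‖ ≤ (4 * N₀ * ‖u₀‖) * ‖v - (u : X)‖ := by
    have := key v u hvR ((hmem _).mp u.2)
    rwa [← hv, ← hfix'] at this
  nlinarith
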